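/- Let G be a finite simple graph with minimum degree at least 1. Then R(G) ≤ |G|/2, where R(G) = ∑_{uv ∈ E(G)} (d(u)·d(v))^{-1/2} is the Randić index and |G| is the number of vertices. -/
import Mathlib

open Finset SimpleGraph

lemma dart_sum_fst {V : Type*} [Fintype V] [DecidableEq V]
    (G : SimpleGraph V) [DecidableRel G.Adj] (g : V → ℝ) :
    ∑ d : G.Dart, g d.fst = ∑ v : V, (G.degree v : ℝ) * g v := by
  rw [← Finset.sum_fiberwise_of_maps_to' (g := fun d : G.Dart => d.fst)
    (fun d _ => Finset.mem_univ d.fst) g]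
  refine Finset.sum_congr rfl fun v _ => ?_
  rw [Finset.sum_const, nsmul_eq_mul, G.dart_fst_fiber_card_eq_degree v]

lemma dart_sum_snd {V : Type*} [Fintype V] [DecidableEq V]
    (G : SimpleGraph V) [DecidableRel G.Adj] (g : V → ℝ) :
    ∑ d : G.Dart, g d.snd = ∑ v : V, (G.degree v : ℝ) * g v := by
  rw [← dart_sum_fst G g]
  exact Fintype.sum_equiv ⟨SimpleGraph.Dart.symm, SimpleGraph.Dart.symm,
    SimpleGraph.Dart.symm_involutive, SimpleGraph.Dart.symm_involutive⟩ _ _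
    (fun d => rfl)

lemma edge_sum_eq_half_dart_sum {V : Type*} [Fintype V] [DecidableEq V]
    (G : SimpleGraph V) [DecidableRel G.Adj] (F : Sym2 V → ℝ) :
    ∑ d : G.Dart, F d.edge = 2 * ∑ e ∈ G.edgeFinset, F e := by
  rw [← Finset.sum_fiberwise_of_maps_to' (g := fun d : G.Dart => d.edge)
    (fun d _ => mem_edgeFinset.mpr d.edge_mem) F, Finset.mul_sum]
  refine Finset.sum_congr rfl fun e he => ?_
  rw [Finset.sum_const, nsmul_eq_mul,
    show ({d : G.Dart | d.edge = e} : Finset _).card = 2 from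
      G.dart_edge_fiber_card e (mem_edgeFinset.mp he)]
  norm_num

lemma amgm_inv_sqrt {a b : ℝ} (ha : 1 ≤ a) (hb : 1 ≤ b) :
    (a * b) ^ (-(1 / 2) : ℝ) ≤ (1 / a + 1 / b) / 2 := by
  have ha0 : 0 < a := by linarith
  have hb0 : 0 < b := by linarith
  have hab : 0 ≤ a * b := by positivity
  have hs : Real.sqrt (a * b) ^ 2 = a * b := Real.sq_sqrt hab
  have hs0 : 0 < Real.sqrt (a * b) := Real.sqrt_pos.mpr (by positivity)
  have h2s : 2 * Real.sqrt (a * b) ≤ a + b := by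
    nlinarith [sq_nonneg (a - b), sq_nonneg (Real.sqrt (a * b) - (a + b) / 2)]
  have heq : (a * b) ^ (-(1 / 2) : ℝ) = (Real.sqrt (a * b))⁻¹ := by
    rw [Real.rpow_neg hab, ← Real.sqrt_eq_rpow]
  rw [heq, inv_eq_one_div, show (1 / a + 1 / b) / 2 = (a + b) / (2 * (a * b)) by
    field_simp; ring, div_le_div_iff₀ hs0 (by positivity)]
  nlinarith [mul_le_mul_of_nonneg_right h2s hs0.le]

/-- **Theorem (upper bound for the Randić index).**
Every graph `G` with minimum degree at least 1 satisfies `R(G) ≤ |G|/2`. -/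
theorem randic_index_upper_bound {V : Type*} [Fintype V] [DecidableEq V]
    (G : SimpleGraph V) [DecidableRel G.Adj]
    (hmindeg : ∀ v : V, 1 ≤ G.degree v) :
    ∑ e ∈ G.edgeFinset,
        Sym2.lift ⟨fun u v => ((G.degree u : ℝ) * (G.degree v : ℝ)) ^ (-(1 / 2) : ℝ),
          fun u v => by simp [mul_comm]⟩ e ≤
      (Fintype.card V : ℝ) / 2 := by
  set F : Sym2 V → ℝ := Sym2.lift ⟨fun u v => ((G.degree u : ℝ) * (G.degree v : ℝ)) ^ (-(1 / 2) : ℝ),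
          fun u v => by simp [mul_comm]⟩ with hF
  have key : ∑ d : G.Dart, F d.edge = 2 * ∑ e ∈ G.edgeFinset, F e :=
    edge_sum_eq_half_dart_sum G F
  have hbound : ∑ d : G.Dart, F d.edge ≤
      ∑ d : G.Dart, ((1 / (G.degree d.fst : ℝ)) / 2 + (1 / (G.degree d.snd : ℝ)) / 2) := by
    refine Finset.sum_le_sum fun d _ => ?_
    have h1 : (1 : ℝ) ≤ (G.degree d.fst : ℝ) := by exact_mod_cast hmindeg d.fst
    have h2 : (1 : ℝ) ≤ (G.degree d.snd : ℝ) := by exact_mod_cast hmindeg d.snd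
    have hFd : F d.edge = ((G.degree d.fst : ℝ) * (G.degree d.snd : ℝ)) ^ (-(1 / 2) : ℝ) := by
      rw [hF]
      cases d with
      | mk p h => cases p; rfl
    rw [hFd]
    have := amgm_inv_sqrt h1 h2
    linarith
  rw [Finset.sum_add_distrib] at hbound
  have hconst : ∀ v : V, (G.degree v : ℝ) * ((1 / (G.degree v : ℝ)) / 2) = 1 / 2 := by
    intro v
    have h1 : (0 : ℝ) < (G.degree v : ℝ) := by
      exact_mod_cast Nat.lt_of_lt_of_le Nat.zero_lt_one (hmindeg v)
    field_simp
  have hfst : ∑ d : G.Dart, (1 / (G.degree d.fst : ℝ)) / 2 = (Fintype.card V : ℝ) / 2 := by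
    rw [dart_sum_fst G (fun v => (1 / (G.degree v : ℝ)) / 2),
      Finset.sum_congr rfl (fun v _ => hconst v), Finset.sum_const, nsmul_eq_mul,
      Finset.card_univ]
    ring
  have hsnd : ∑ d : G.Dart, (1 / (G.degree d.snd : ℝ)) / 2 = (Fintype.card V : ℝ) / 2 := by
    rw [dart_sum_snd G (fun v => (1 / (G.degree v : ℝ)) / 2),
      Finset.sum_congr rfl (fun v _ => hconst v), Finset.sum_const, nsmul_eq_mul,
      Finset.card_univ]
    ring
  rw [hfst, hsnd, key] at hbound
  linarith
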